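/- Let (G, K_D) be a deterministic mass action system on n species. If some positive state c ∈ ℝ^n_{>0} is a cycle balanced state of (G, K_D), then every state z ∈ ℝ^n is a cycle balanced state of (G, K_D); in particular, for every sequence of distinct complexes (y_1, …, y_j) ⊆ C with j ≥ 3 (setting y_{j+1} := y_1, and setting κ_{y→y'} := 0 if y → y' ∉ R), one has ∏_{i=1}^j κ_{y_i→y_{i+1}} = ∏_{i=1}^j κ_{y_{i+1}→y_i}. -/

import Mathlib

open scoped ENNReal NNReal BigOperators Classical

noncomputable section

namespace CRN

/-- A complex: a vector in `ℤ_{≥0}^n`. -/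
abbrev Cplx (n : ℕ) := Fin n → ℕ

/-- A reaction: an ordered pair of complexes (source, target). -/
abbrev Reaction (n : ℕ) := Cplx n × Cplx n

/-- A reaction network on `n` species: a finite set of reactions, each with
distinct source and target. -/
structure Network (n : ℕ) where
  R : Finset (Reaction n)
  ne_src_tgt : ∀ r ∈ R, r.1 ≠ r.2

/-- The complexes of a network: vectors occurring as source or target of some reaction. -/
def Network.C {n : ℕ} (G : Network n) : Finset (Cplx n) :=
  G.R.image Prod.fst ∪ G.R.image Prod.snd

/-- A network is reversible if `y → y' ∈ R` implies `y' → y ∈ R`. -/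
def Network.Reversible {n : ℕ} (G : Network n) : Prop :=
  ∀ r ∈ G.R, (r.2, r.1) ∈ G.R

/-- A network is weakly reversible if every reaction is contained in a closed
directed path `y_1 → y_2 → ⋯ → y_k` with `k ≥ 2` and `y_1 = y_k`. -/
def Network.WeaklyReversible {n : ℕ} (G : Network n) : Prop :=
  ∀ r ∈ G.R, ∃ (k : ℕ) (ys : ℕ → Cplx n), 2 ≤ k ∧ ys 0 = ys (k - 1) ∧
    (∀ i, i < k - 1 → (ys i, ys (i + 1)) ∈ G.R) ∧
    (∃ i, i < k - 1 ∧ (ys i, ys (i + 1)) = r)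

/-- Embedding of a complex into `ℝ^n`. -/
def toR {n : ℕ} (y : Cplx n) : Fin n → ℝ := fun i => (y i : ℝ)

/-- Embedding of a complex into `ℤ^n`. -/
def toZ {n : ℕ} (y : Cplx n) : Fin n → ℤ := fun i => (y i : ℤ)

/-- Deterministic kinetics: a nonnegative rate function for each reaction,
zero for pairs which are not reactions of the network. -/
structure DetKin {n : ℕ} (G : Network n) where
  rate : Reaction n → (Fin n → ℝ) → ℝ
  nonneg : ∀ r z, 0 ≤ rate r z
  zero_off : ∀ r, r ∉ G.R → ∀ z, rate r z = 0

/-- Stochastic kinetics: a nonnegative rate function on `ℤ^n` for each reaction,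
zero for pairs which are not reactions of the network. -/
structure StochKin {n : ℕ} (G : Network n) where
  rate : Reaction n → (Fin n → ℤ) → ℝ≥0
  zero_off : ∀ r, r ∉ G.R → ∀ x, rate r x = 0

namespace Det

variable {n : ℕ} {G : Network n}

/-- `c` is an equilibrium: `∑_{y→y'∈R} (y'−y) λ_{y→y'}(c) = 0`. -/
def IsEquilibrium (Λ : DetKin G) (c : Fin n → ℝ) : Prop :=
  ∑ r ∈ G.R, Λ.rate r c • (toR r.2 - toR r.1) = 0

/-- `c` is reaction balanced (detailed balanced). -/
def ReactionBalanced (Λ : DetKin G) (c : Fin n → ℝ) : Prop :=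
  ∀ y ∈ G.C, ∀ y' ∈ G.C, Λ.rate (y, y') c = Λ.rate (y', y) c

/-- `c` is complex balanced. -/
def ComplexBalanced (Λ : DetKin G) (c : Fin n → ℝ) : Prop :=
  ∀ y ∈ G.C, ∑ y' ∈ G.C, Λ.rate (y, y') c = ∑ y' ∈ G.C, Λ.rate (y', y) c

/-- `c` is reaction vector balanced. -/
def RVBalanced (Λ : DetKin G) (c : Fin n → ℝ) : Prop :=
  ∀ ξ : Fin n → ℝ,
    ∑ r ∈ G.R.filter (fun r => toR r.2 - toR r.1 = ξ), Λ.rate r c =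
    ∑ r ∈ G.R.filter (fun r => toR r.2 - toR r.1 = -ξ), Λ.rate r c

/-- `c` is cycle balanced. -/
def CycleBalanced (Λ : DetKin G) (c : Fin n → ℝ) : Prop :=
  ∀ j : ℕ, 3 ≤ j → ∀ ys : ℕ → Cplx n,
    (∀ i < j, ys i ∈ G.C) →
    (∀ i < j, ∀ k < j, ys i = ys k → i = k) →
    ∏ i ∈ Finset.range j, Λ.rate (ys i, ys ((i + 1) % j)) c =
    ∏ i ∈ Finset.range j, Λ.rate (ys ((i + 1) % j), ys i) c

/-- The active subnetwork at a state `c`: the reactions with positive rate at `c`. -/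
def activeSub (Λ : DetKin G) (c : Fin n → ℝ) : Network n :=
  ⟨G.R.filter (fun r => 0 < Λ.rate r c),
   fun r hr => G.ne_src_tgt r (Finset.mem_filter.mp hr).1⟩

end Det

/-- The stoichiometric subspace: the span of the reaction vectors. -/
def stoichSubspace {n : ℕ} (G : Network n) : Submodule ℝ (Fin n → ℝ) :=
  Submodule.span ℝ ((fun r : Reaction n => toR r.2 - toR r.1) '' (G.R : Set (Reaction n)))

/-- The stoichiometric compatibility class of `v`: `(v + S) ∩ ℝ^n_{≥0}`. -/
def compatClass {n : ℕ} (G : Network n) (v : Fin n → ℝ) : Set (Fin n → ℝ) :=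
  {z | z - v ∈ stoichSubspace G ∧ ∀ i, 0 ≤ z i}

/-- A measure on `ℤ^n`: a function with values in `[0,∞]`. -/
abbrev Meas (n : ℕ) := (Fin n → ℤ) → ℝ≥0∞

namespace Stoch

variable {n : ℕ} {G : Network n}

def IsDistribution (π : Meas n) : Prop := ∑' x, π x = 1

def SigmaFinite (π : Meas n) : Prop := ∀ x, π x < ⊤

def FiniteMeas (π : Meas n) : Prop := ∑' x, π x < ⊤

def supp (π : Meas n) : Set (Fin n → ℤ) := {x | π x ≠ 0}

/-- `π` is within `Γ` if its support is nonempty and contained in `Γ`. -/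
def Within (π : Meas n) (Γ : Set (Fin n → ℤ)) : Prop := (supp π).Nonempty ∧ supp π ⊆ Γ

/-- `π` is a stationary measure. -/
def Stationary (Λ : StochKin G) (π : Meas n) : Prop :=
  ∀ x : Fin n → ℤ,
    π x * ∑ r ∈ G.R, (Λ.rate r x : ℝ≥0∞) =
    ∑ r ∈ G.R, π (x + toZ r.1 - toZ r.2) * (Λ.rate r (x + toZ r.1 - toZ r.2) : ℝ≥0∞)

def StationaryDistribution (Λ : StochKin G) (π : Meas n) : Prop :=
  IsDistribution π ∧ Stationary Λ π

/-- `π` is a reaction balanced measure. -/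
def ReactionBalancedM (Λ : StochKin G) (π : Meas n) : Prop :=
  ∀ x : Fin n → ℤ, ∀ y ∈ G.C, ∀ y' ∈ G.C,
    π x * (Λ.rate (y, y') x : ℝ≥0∞) =
    π (x + toZ y' - toZ y) * (Λ.rate (y', y) (x + toZ y' - toZ y) : ℝ≥0∞)

/-- `π` is a complex balanced measure. -/
def ComplexBalancedM (Λ : StochKin G) (π : Meas n) : Prop :=
  ∀ x : Fin n → ℤ, ∀ y ∈ G.C,
    π x * ∑ y' ∈ G.C, (Λ.rate (y, y') x : ℝ≥0∞) =
    ∑ y' ∈ G.C, π (x + toZ y' - toZ y) * (Λ.rate (y', y) (x + toZ y' - toZ y) : ℝ≥0∞)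

/-- `π` is a reaction vector balanced measure (detailed balanced as a Markov chain). -/
def RVBalancedM (Λ : StochKin G) (π : Meas n) : Prop :=
  ∀ x : Fin n → ℤ, ∀ ξ : Fin n → ℤ,
    π x * ∑ r ∈ G.R.filter (fun r => toZ r.2 - toZ r.1 = ξ), (Λ.rate r x : ℝ≥0∞) =
    π (x + ξ) * ∑ r ∈ G.R.filter (fun r => toZ r.2 - toZ r.1 = -ξ), (Λ.rate r (x + ξ) : ℝ≥0∞)

/-- `π` is a cycle balanced measure. -/
def CycleBalancedM (Λ : StochKin G) (π : Meas n) : Prop :=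
  ∀ x : Fin n → ℤ, ∀ j : ℕ, 3 ≤ j → ∀ ys : ℕ → Cplx n,
    (∀ i < j, ys i ∈ G.C) →
    (∀ i < j, ∀ k < j, ys i = ys k → i = k) →
    ∏ i ∈ Finset.range j,
      π (x + toZ (ys i)) * (Λ.rate (ys i, ys ((i + 1) % j)) (x + toZ (ys i)) : ℝ≥0∞) =
    ∏ i ∈ Finset.range j,
      π (x + toZ (ys ((i + 1) % j))) *
        (Λ.rate (ys ((i + 1) % j), ys i) (x + toZ (ys ((i + 1) % j))) : ℝ≥0∞)

/-- One step of the dynamics: from `u`, an active reaction takes `u` to `u + y' - y`. -/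
def Step (Λ : StochKin G) (u v : Fin n → ℤ) : Prop :=
  ∃ r ∈ G.R, 0 < Λ.rate r u ∧ v = u + toZ r.2 - toZ r.1

/-- `u` is accessible from `x`. -/
def Accessible (Λ : StochKin G) (x u : Fin n → ℤ) : Prop :=
  Relation.ReflTransGen (Step Λ) x u

/-- `Γ` is an irreducible component. -/
def IrredComp (Λ : StochKin G) (Γ : Set (Fin n → ℤ)) : Prop :=
  Γ.Nonempty ∧ ∀ x ∈ Γ, ∀ u, Accessible Λ x u ↔ u ∈ Γ

/-- `Γ` is active: every reaction is active at some state of `Γ`. -/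
def ActiveSet (Λ : StochKin G) (Γ : Set (Fin n → ℤ)) : Prop :=
  ∀ r ∈ G.R, ∃ x ∈ Γ, 0 < Λ.rate r x

/-- The active subnetwork of `(G,Λ)` in `Γ`. -/
def activeSubnet (Λ : StochKin G) (Γ : Set (Fin n → ℤ)) : Network n :=
  ⟨G.R.filter (fun r => ∃ x ∈ Γ, 0 < Λ.rate r x),
   fun r hr => G.ne_src_tgt r (Finset.mem_filter.mp hr).1⟩

/-- `(G,Λ)` is a reaction balanced stochastic reaction system. -/
def SysReactionBalanced (Λ : StochKin G) : Prop :=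
  (∃ π Γ, StationaryDistribution Λ π ∧ IrredComp Λ Γ ∧ ActiveSet Λ Γ ∧ Within π Γ) ∧
  ∀ π Γ, StationaryDistribution Λ π → IrredComp Λ Γ → ActiveSet Λ Γ → Within π Γ →
    ReactionBalancedM Λ π

/-- `(G,Λ)` is a complex balanced stochastic reaction system. -/
def SysComplexBalanced (Λ : StochKin G) : Prop :=
  (∃ π Γ, StationaryDistribution Λ π ∧ IrredComp Λ Γ ∧ ActiveSet Λ Γ ∧ Within π Γ) ∧
  ∀ π Γ, StationaryDistribution Λ π → IrredComp Λ Γ → ActiveSet Λ Γ → Within π Γ →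
    ComplexBalancedM Λ π

/-- `(G,Λ)` is a reaction vector balanced stochastic reaction system. -/
def SysRVBalanced (Λ : StochKin G) : Prop :=
  (∃ π Γ, StationaryDistribution Λ π ∧ IrredComp Λ Γ ∧ ActiveSet Λ Γ ∧ Within π Γ) ∧
  ∀ π Γ, StationaryDistribution Λ π → IrredComp Λ Γ → ActiveSet Λ Γ → Within π Γ →
    RVBalancedM Λ π

/-- `(G,Λ)` is a cycle balanced stochastic reaction system. -/
def SysCycleBalanced (Λ : StochKin G) : Prop :=
  (∃ π Γ, StationaryDistribution Λ π ∧ IrredComp Λ Γ ∧ ActiveSet Λ Γ ∧ Within π Γ) ∧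
  ∀ π Γ, StationaryDistribution Λ π → IrredComp Λ Γ → ActiveSet Λ Γ → Within π Γ →
    CycleBalancedM Λ π

end Stoch

/-- A mass action system: a network together with positive rate constants
(set to `0` off the reaction set, per the usual convention). -/
structure MASystem (n : ℕ) where
  G : Network n
  κ : Reaction n → ℝ
  pos : ∀ r ∈ G.R, 0 < κ r
  zero_off : ∀ r, r ∉ G.R → κ r = 0

/-- The deterministic mass action kinetics: `λ_{y→y'}(z) = 1_{{z ≥ 0}} κ_{y→y'} z^y`. -/
def MASystem.detKin {n : ℕ} (S : MASystem n) : DetKin S.G where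
  rate r z := (if ∀ i, 0 ≤ z i then (1 : ℝ) else 0) * S.κ r * ∏ i, z i ^ (r.1 i)
  nonneg r z := by
    have hκ : 0 ≤ S.κ r := by
      by_cases h : r ∈ S.G.R
      · exact le_of_lt (S.pos r h)
      · exact le_of_eq (S.zero_off r h).symm
    by_cases h : ∀ i, 0 ≤ z i
    · have hp : (0 : ℝ) ≤ ∏ i, z i ^ (r.1 i) :=
        Finset.prod_nonneg fun i _ => pow_nonneg (h i) _
      simp only [if_pos h, one_mul]
      exact mul_nonneg hκ hp
    · simp [if_neg h]
  zero_off r hr z := by simp [S.zero_off r hr]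

/-- The stochastic mass action kinetics:
`λ_{y→y'}(x) = κ_{y→y'} · (x!/(x−y)!) · 1_{{x ≥ y}}`. -/
def MASystem.stochKin {n : ℕ} (S : MASystem n) : StochKin S.G where
  rate r x :=
    if ∀ i, (r.1 i : ℤ) ≤ x i then
      (S.κ r).toNNReal *
        (((∏ i, ∏ j ∈ Finset.range (r.1 i), (x i - (j : ℤ))).toNat : ℝ≥0))
    else 0
  zero_off r hr x := by simp [S.zero_off r hr]

namespace Det

/-- `(G,K_D)` is a reaction balanced deterministic mass action system. -/
def SysReactionBalanced {n : ℕ} (S : MASystem n) : Prop :=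
  (∃ c : Fin n → ℝ, (∀ i, 0 < c i) ∧ IsEquilibrium S.detKin c) ∧
  ∀ c : Fin n → ℝ, (∀ i, 0 < c i) → IsEquilibrium S.detKin c → ReactionBalanced S.detKin c

/-- `(G,K_D)` is a complex balanced deterministic mass action system. -/
def SysComplexBalanced {n : ℕ} (S : MASystem n) : Prop :=
  (∃ c : Fin n → ℝ, (∀ i, 0 < c i) ∧ IsEquilibrium S.detKin c) ∧
  ∀ c : Fin n → ℝ, (∀ i, 0 < c i) → IsEquilibrium S.detKin c → ComplexBalanced S.detKin c

/-- `(G,K_D)` is a cycle balanced deterministic mass action system. -/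
def SysCycleBalanced {n : ℕ} (S : MASystem n) : Prop :=
  (∃ c : Fin n → ℝ, (∀ i, 0 < c i) ∧ IsEquilibrium S.detKin c) ∧
  ∀ c : Fin n → ℝ, (∀ i, 0 < c i) → IsEquilibrium S.detKin c → CycleBalanced S.detKin c

end Det

end CRN

open CRN

/-- Cyclic shift invariance of a product over `range j`. -/
lemma cyclic_shift_prod {M : Type*} [CommMonoid M] (j : ℕ) (hj : 1 ≤ j)
    (g : ℕ → M) :
    ∏ i ∈ Finset.range j, g ((i + 1) % j) = ∏ i ∈ Finset.range j, g (i % j) := by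
  have hjpos : 0 < j := hj
  refine Finset.prod_nbij' (fun i => (i + 1) % j) (fun i => (i + (j - 1)) % j) ?_ ?_ ?_ ?_ ?_
  · intro a ha; exact Finset.mem_range.mpr (Nat.mod_lt _ hjpos)
  · intro a ha; exact Finset.mem_range.mpr (Nat.mod_lt _ hjpos)
  · intro a ha
    have ha' := Finset.mem_range.mp ha
    rcases Nat.lt_or_ge (a + 1) j with h1 | h1
    · rw [Nat.mod_eq_of_lt h1]
      have : a + 1 + (j - 1) = a + j := by omega
      rw [this, Nat.add_mod_right, Nat.mod_eq_of_lt ha']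
    · have : a + 1 = j := by omega
      rw [this, Nat.mod_self, Nat.zero_add, Nat.mod_eq_of_lt (by omega)]
      omega
  · intro a ha
    have ha' := Finset.mem_range.mp ha
    rcases Nat.eq_zero_or_pos a with h0 | h0
    · subst h0
      have h1 : (0 + (j - 1)) % j = j - 1 := by
        rw [Nat.zero_add]; exact Nat.mod_eq_of_lt (by omega)
      rw [h1]
      have h2 : j - 1 + 1 = j := by omega
      rw [h2, Nat.mod_self]
    · have h1 : (a + (j - 1)) % j = a - 1 := by
        have h2 : a + (j - 1) = (a - 1) + j := by omega
        rw [h2, Nat.add_mod_right]; exact Nat.mod_eq_of_lt (by omega)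
      rw [h1]
      have h3 : a - 1 + 1 = a := by omega
      rw [h3]; exact Nat.mod_eq_of_lt ha'
  · intro a ha
    exact congrArg g (Nat.mod_eq_of_lt (Nat.mod_lt _ hjpos)).symm

lemma cyclic_shift_prod' {M : Type*} [CommMonoid M] (j : ℕ) (hj : 1 ≤ j)
    (f : ℕ → M) :
    ∏ i ∈ Finset.range j, f ((i + 1) % j) = ∏ i ∈ Finset.range j, f i := by
  rw [cyclic_shift_prod j hj f]
  exact Finset.prod_congr rfl fun i hi => by
    rw [Nat.mod_eq_of_lt (Finset.mem_range.mp hi)]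

/-- For a deterministic mass action system, a positive cycle balanced
state forces every state to be cycle balanced; in particular the rate constants satisfy
the cycle conditions. -/
theorem mass_action_cycle_balanced_everywhere {n : ℕ} (S : MASystem n)
    (c : Fin n → ℝ) (hc : ∀ i, 0 < c i) (h : Det.CycleBalanced S.detKin c) :
    (∀ z : Fin n → ℝ, Det.CycleBalanced S.detKin z) ∧
    (∀ j : ℕ, 3 ≤ j → ∀ ys : ℕ → Cplx n,
      (∀ i < j, ys i ∈ S.G.C) →
      (∀ i < j, ∀ k < j, ys i = ys k → i = k) →
      ∏ i ∈ Finset.range j, S.κ (ys i, ys ((i + 1) % j)) =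
      ∏ i ∈ Finset.range j, S.κ (ys ((i + 1) % j), ys i)) := by
  have rate_eq : ∀ (r : Reaction n) (z : Fin n → ℝ),
      S.detKin.rate r z =
        (if ∀ i, 0 ≤ z i then (1:ℝ) else 0) * S.κ r * ∏ i, z i ^ (r.1 i) :=
    fun r z => rfl
  have hκ : ∀ j : ℕ, 3 ≤ j → ∀ ys : ℕ → Cplx n,
      (∀ i < j, ys i ∈ S.G.C) → (∀ i < j, ∀ k < j, ys i = ys k → i = k) →
      ∏ i ∈ Finset.range j, S.κ (ys i, ys ((i + 1) % j)) =
      ∏ i ∈ Finset.range j, S.κ (ys ((i + 1) % j), ys i) := by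
    intro j hj ys hmem hinj
    have hj1 : 1 ≤ j := by omega
    have hcyc := h j hj ys hmem hinj
    have hcpos : ∀ i, 0 ≤ c i := fun i => (hc i).le
    simp only [rate_eq, if_pos hcpos, one_mul, Finset.prod_mul_distrib] at hcyc
    rw [cyclic_shift_prod' j hj1 (fun i => ∏ i', c i' ^ (ys i i'))] at hcyc
    have hm : 0 < ∏ i ∈ Finset.range j, ∏ i', c i' ^ (ys i i') :=
      Finset.prod_pos fun i _ => Finset.prod_pos fun i' _ => pow_pos (hc i') _
    exact mul_right_cancel₀ (ne_of_gt hm) hcyc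
  refine ⟨?_, hκ⟩
  intro z j hj ys hmem hinj
  have hj1 : 1 ≤ j := by omega
  simp only [rate_eq, Finset.prod_mul_distrib]
  rw [cyclic_shift_prod' j hj1 (fun i => ∏ i', z i' ^ (ys i i')),
    hκ j hj ys hmem hinj]
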